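/- arXiv:2506.10951 — 2 statements merged into one kernel-verified Lean document; each statement's English description precedes it below -/
import Mathlib

section
/- Let (X, λ) be a convergence approach space and A ⊆ X. Then C(adh A) = C(θ_A), i.e., the smallest contraction above the adherence function of A equals the smallest contraction above the indicator θ_A. Moreover θ_A is a contraction if and only if A is closed in the convergence r(λ) given by x ∈ lim_{r(λ)}F ⟺ λ(F)(x) > 0. -/
open Filter Set
open scoped ENNReal

noncomputable section
attribute [local instance] Classical.propDecidable

instance : Fact ((0:ℝ) ≤ 1) := ⟨zero_le_one⟩

/-- The value quantale `V = [0,1]` with multiplication. -/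
abbrev V := unitInterval

/-- Residuation `t ⊘ x` on `[0,1]`: `min (t/x) 1` if `x ≠ 0`, and `1` if `x = 0`. -/
def oslash (t x : V) : V :=
  if x = 0 then 1
  else ⟨min (t.1 / x.1) 1, ⟨le_min (div_nonneg t.2.1 x.2.1) zero_le_one, min_le_right _ _⟩⟩

/-- The grill of a filter: sets meeting every member of the filter. -/
def grill {X : Type*} (F : Filter X) : Set (Set X) := {B | ∀ S ∈ F, (B ∩ S).Nonempty}

/-- `limsup` of a `V`-valued function along a family of sets. -/
def limsupF {X : Type*} (F : Set (Set X)) (f : X → V) : V := ⨅ s ∈ F, ⨆ t ∈ s, f t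

/-- `liminf` of a `V`-valued function along a family of sets. -/
def liminfF {X : Type*} (F : Set (Set X)) (f : X → V) : V := ⨆ s ∈ F, ⨅ t ∈ s, f t

/-- A convergence approach space structure on `X`, valued in `V = [0,1]`:
`lam F x` measures how well `F` converges to `x` (1 = full convergence);
finer filters converge better, and principal ultrafilters fully converge. -/
structure CAS (X : Type*) where
  lam : Filter X → X → V
  mono : ∀ ⦃F G : Filter X⦄, F ≤ G → lam G ≤ lam F
  centered : ∀ x : X, lam (pure x) x = 1

/-- The standard approach structure on `V`. -/
def lamV (F : Filter V) (v : V) : V := oslash v (⨆ A ∈ grill F, sInf A)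

/-- `f : X → V` is a contraction into `(V, λ_V)` (characterized pointwise). -/
def Contr {X : Type*} (Λ : CAS X) (f : X → V) : Prop :=
  ∀ (F : Filter X) (x : X), Λ.lam F x ≤ oslash (f x) (limsupF F.sets f)

/-- Indicator function of a set, valued in `V`. -/
def theta {X : Type*} (A : Set X) : X → V := fun x => if x ∈ A then 1 else 0

/-- The lower-hull operator: the smallest contraction above `f`. -/
def Cop {X : Type*} (Λ : CAS X) (f : X → V) : X → V :=
  sInf {g : X → V | Contr Λ g ∧ f ≤ g}

/-- The adherence function of a set `A`. -/
def adhSet {X : Type*} (Λ : CAS X) (A : Set X) : X → V :=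
  fun x => ⨆ (U : Ultrafilter X) (_ : A ∈ U), Λ.lam U x

/-- The adherence function of a filter. -/
def adhFilter {X : Type*} (Λ : CAS X) (F : Filter X) : X → V :=
  fun x => ⨆ (U : Ultrafilter X) (_ : (U : Filter X) ≤ F), Λ.lam U x

/-- Adherence in `(V, λ_V)` of a subset of `V`. -/
def adhV (A : Set V) (v : V) : V := ⨆ (U : Ultrafilter V) (_ : A ∈ U), lamV U v

lemma V.le_one (v : V) : v ≤ (1 : V) := by
  change v.1 ≤ (1 : ℝ)
  exact v.2.2

lemma V.zero_le (v : V) : (0 : V) ≤ v := by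
  change (0 : ℝ) ≤ v.1
  exact v.2.1

lemma V.one_ne_zero : (1 : V) ≠ 0 := by
  intro h
  have := congrArg Subtype.val h
  norm_num at this

lemma oslash_one (t : V) : oslash t 1 = t := by
  rw [oslash, if_neg V.one_ne_zero]
  apply Subtype.ext
  show min (t.1 / (1:ℝ)) 1 = t.1
  rw [div_one, min_eq_left t.2.2]

lemma oslash_zero (t : V) : oslash t 0 = 1 := if_pos rfl

lemma limsupF_mono {X : Type*} {S : Set (Set X)} {f g : X → V} (h : f ≤ g) :
    limsupF S f ≤ limsupF S g :=
  iInf_mono fun s => iInf_mono fun _ => iSup_mono fun t => iSup_mono fun _ => h t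

lemma limsup_theta_eq_one {X : Type*} {F : Filter X} {A : Set X} (h : A ∈ grill F) :
    limsupF F.sets (theta A) = 1 := by
  refine le_antisymm (V.le_one _) ?_
  refine le_iInf fun s => le_iInf fun hs => ?_
  obtain ⟨t, htA, hts⟩ := h s hs
  refine le_trans ?_ (le_iSup₂ (f := fun t (_ : t ∈ s) => theta A t) t hts)
  simp [theta, htA]

lemma limsup_theta_eq_zero {X : Type*} {F : Filter X} {A : Set X} (h : A ∉ grill F) :
    limsupF F.sets (theta A) = 0 := by
  refine le_antisymm ?_ (V.zero_le _)
  simp only [grill, Set.mem_setOf_eq, not_forall] at h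
  obtain ⟨s, hs, hempty⟩ := h
  refine le_trans (iInf₂_le s hs) ?_
  refine iSup₂_le fun t ht => ?_
  have htA : t ∉ A := fun hA => hempty ⟨t, hA, ht⟩
  simp [theta, htA, V.zero_le]

/-- `C(adh A) = C(θ_A)`, and `θ_A` is a contraction iff `A` is
closed in the convergence `r(λ)` (`x ∈ lim_{r(λ)} F ↔ λ(F)(x) > 0`). -/
theorem stmt17 {X : Type*} (Λ : CAS X) (A : Set X) :
    Cop Λ (adhSet Λ A) = Cop Λ (theta A) ∧
    (Contr Λ (theta A) ↔
      ∀ F : Filter X, A ∈ grill F → ∀ x : X, 0 < Λ.lam F x → x ∈ A) := by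
  have htheta_le_adh : theta A ≤ adhSet Λ A := by
    intro x
    by_cases hx : x ∈ A
    · have h1 : A ∈ (pure x : Ultrafilter X) := by
        rw [Ultrafilter.mem_pure]; exact hx
      calc theta A x = 1 := by simp [theta, hx]
        _ = Λ.lam (pure x) x := (Λ.centered x).symm
        _ ≤ ⨆ (_ : A ∈ (pure x : Ultrafilter X)), Λ.lam ((pure x : Ultrafilter X) : Filter X) x := by
            rw [Ultrafilter.coe_pure]; exact le_iSup (fun _ => Λ.lam (pure x) x) h1
        _ ≤ adhSet Λ A x := le_iSup (fun U : Ultrafilter X => ⨆ (_ : A ∈ U), Λ.lam U x) _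
    · simp [theta, hx, V.zero_le]
  constructor
  · -- Cop equality
    unfold Cop
    congr 1
    ext g
    simp only [Set.mem_setOf_eq, and_congr_right_iff]
    intro hg
    constructor
    · intro hle
      exact le_trans htheta_le_adh hle
    · intro hle x
      refine iSup₂_le fun U hU => ?_
      have hgr : A ∈ grill (U : Filter X) := by
        intro s hs
        have := (U.inter_mem hU hs)
        exact Ultrafilter.nonempty_of_mem this
      have hlim : limsupF (U : Filter X).sets g = 1 := by
        refine le_antisymm (V.le_one _) ?_
        calc (1:V) = limsupF (U : Filter X).sets (theta A) := (limsup_theta_eq_one hgr).symm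
          _ ≤ limsupF (U : Filter X).sets g := limsupF_mono hle
      have := hg (U : Filter X) x
      rwa [hlim, oslash_one] at this
  · constructor
    · intro hC F hgr x hpos
      have := hC F x
      rw [limsup_theta_eq_one hgr, oslash_one] at this
      by_contra hx
      have hz : theta A x = 0 := by simp [theta, hx]
      rw [hz] at this
      exact absurd (hpos.trans_le this) (lt_irrefl _)
    · intro h F x
      by_cases hgr : A ∈ grill F
      · rw [limsup_theta_eq_one hgr, oslash_one]
        by_cases hx : x ∈ A
        · simp only [theta, if_pos hx]
          exact V.le_one _
        · simp only [theta, if_neg hx]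
          by_contra hle
          have hpos : 0 < Λ.lam F x := lt_of_not_ge fun hc => hle (le_trans hc (V.zero_le _))
          exact hx (h F hgr x hpos)
      · rw [limsup_theta_eq_zero hgr, oslash_zero]
        exact V.le_one _
end
end

section
/- Let (X, λ) be an approach space (a pre-approach space in which adh A is a contraction for every A ⊆ X). Then for every filter F on X: λ(F)(x) = ⨅_{B ∈ F^#} cl B(x), and adh_λ F = ⨅_{F ∈ F} cl F pointwise, where cl B = C(θ_B) = adh_λ B. In particular adh_λ F is a contraction for every filter F. -/
open Filter Set
open scoped ENNReal

noncomputable section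
attribute [local instance] Classical.propDecidable

/- ## Auxiliary lemmas -/

lemma le_oslash_iff {v t r : V} : v ≤ oslash t r ↔ v * r ≤ t := by
  unfold oslash
  split_ifs with h
  · simp only [h, mul_zero]
    exact ⟨fun _ => unitInterval.nonneg', fun _ => unitInterval.le_one'⟩
  · have hr : (0:ℝ) < r.1 := lt_of_le_of_ne r.2.1 (by
      intro h'; exact h (Subtype.ext h'.symm))
    rw [← Subtype.coe_le_coe, ← Subtype.coe_le_coe]
    show (v:ℝ) ≤ min (t.1 / r.1) 1 ↔ (v:ℝ) * r ≤ (t:ℝ)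
    rw [le_min_iff, le_div_iff₀ hr]
    simp [v.2.2]

lemma V_mul_le_mul_left {a b c : V} (h : b ≤ c) : a * b ≤ a * c := by
  rw [← Subtype.coe_le_coe]
  exact mul_le_mul_of_nonneg_left h a.2.1

lemma V_mul_one {a : V} : a * 1 = a := Subtype.ext (mul_one _)

lemma adhSet_mono {X : Type*} (Λ : CAS X) {A B : Set X} (h : A ⊆ B) :
    adhSet Λ A ≤ adhSet Λ B := fun x =>
  iSup₂_mono' fun U hU => ⟨U, Filter.mem_of_superset hU h, le_rfl⟩

lemma grill_ultrafilter {X : Type*} (U : Ultrafilter X) :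
    grill (U : Filter X) = {B | B ∈ U} := by
  ext B
  constructor
  · intro hB
    by_contra hB'
    rcases hB Bᶜ ((Ultrafilter.compl_mem_iff_notMem).2 hB') with ⟨y, hy1, hy2⟩
    exact hy2 hy1
  · intro hB S hS
    have : B ∩ S ∈ U := Filter.inter_mem hB hS
    exact Ultrafilter.nonempty_of_mem this

lemma theta_le_adhSet {X : Type*} (Λ : CAS X) (B : Set X) :
    theta B ≤ adhSet Λ B := by
  intro x
  unfold theta
  split_ifs with hx
  · refine le_iSup₂_of_le ((pure x : Ultrafilter X)) hx ?_
    have : ((pure x : Ultrafilter X) : Filter X) = pure x := rfl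
    rw [this, Λ.centered x]
  · exact unitInterval.nonneg'

lemma adhSet_le_of_contr {X : Type*} (Λ : CAS X) (B : Set X) {g : X → V}
    (hg : Contr Λ g) (hθ : theta B ≤ g) : adhSet Λ B ≤ g := by
  intro x
  refine iSup₂_le fun U hU => ?_
  have hone : (1 : V) ≤ limsupF (U : Filter X).sets g := by
    refine le_iInf₂ fun s hs => ?_
    rcases Ultrafilter.nonempty_of_mem (Filter.inter_mem hU hs) with ⟨t, htB, hts⟩
    refine le_iSup₂_of_le t hts ?_
    have := hθ t
    simpa [theta, htB] using this
  have h1 : Λ.lam U x ≤ oslash (g x) (limsupF (U : Filter X).sets g) := hg U x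
  rw [le_oslash_iff] at h1
  calc Λ.lam U x = Λ.lam U x * 1 := V_mul_one.symm
    _ ≤ Λ.lam U x * limsupF (U : Filter X).sets g := V_mul_le_mul_left hone
    _ ≤ g x := h1

lemma cop_theta_eq_adhSet {X : Type*} (Λ : CAS X)
    (hadh : ∀ A : Set X, Contr Λ (adhSet Λ A)) (B : Set X) :
    Cop Λ (theta B) = adhSet Λ B := by
  apply le_antisymm
  · exact sInf_le ⟨hadh B, theta_le_adhSet Λ B⟩
  · exact le_sInf fun g ⟨hg, hθ⟩ => adhSet_le_of_contr Λ B hg hθ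

/-- The key lemma: the adherence of a filter equals the infimum of the adherences
of its members. -/
lemma adhFilter_eq {X : Type*} (Λ : CAS X)
    (hpre : ∀ (F : Filter X) (x : X), Λ.lam F x = ⨅ B ∈ grill F, adhSet Λ B x)
    (F : Filter X) (x : X) :
    adhFilter Λ F x = ⨅ s ∈ F, adhSet Λ s x := by
  apply le_antisymm
  · refine iSup₂_le fun U hU => le_iInf₂ fun s hs => ?_
    exact le_iSup₂_of_le U (hU hs) le_rfl
  · set a : V := ⨅ s ∈ F, adhSet Λ s x with ha
    rcases eq_or_lt_of_le (bot_le : (⊥ : V) ≤ a) with hbot | hbot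
    · rw [← hbot]; exact bot_le
    -- a > ⊥ : build an ultrafilter refining F avoiding all sets with small adherence
    set S : Set (Set X) := {B | adhSet Λ B x < a} with hS
    set G : Filter X := F ⊓ ⨅ B ∈ S, 𝓟 Bᶜ with hG
    have hne : G.NeBot := by
      rw [Filter.neBot_iff]
      intro hGbot
      have hmem : (∅ : Set X) ∈ G := by rw [hGbot]; exact Filter.mem_bot
      rw [hG, Filter.mem_inf_iff] at hmem
      rcases hmem with ⟨s, hsF, t, htI, hst⟩
      -- t belongs to the infimum of principals
      have := (Filter.mem_iInf).1 (by
        rw [iInf_subtype'] at htI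
        exact htI)
      rcases this with ⟨I, hIfin, Vf, hVf, ht⟩
      -- s ⊆ union of the sets in I
      have hsub : s ⊆ ⋃ i : I, ((i : {B // B ∈ S}) : Set X) := by
        intro y hy
        by_contra hy'
        have hyt : y ∈ t := by
          rw [ht]
          refine mem_iInter.2 fun i => ?_
          have hV := hVf i
          rw [Filter.mem_principal] at hV
          apply hV
          simp only [mem_iUnion, not_exists] at hy'
          exact hy' i
        have : y ∈ s ∩ t := ⟨hy, hyt⟩
        rw [← hst] at this
        exact this
      -- a ≤ adhSet s x
      have haS : a ≤ adhSet Λ s x := iInf₂_le s hsF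
      -- adhSet s x ≤ sup over I
      have hsup : adhSet Λ s x ≤ ⨆ i : I, adhSet Λ ((i : {B // B ∈ S}) : Set X) x := by
        refine iSup₂_le fun U hU => ?_
        have hUnion : (⋃ i : I, ((i : {B // B ∈ S}) : Set X)) ∈ U :=
          Filter.mem_of_superset hU hsub
        have hUnion' : (⋃ i ∈ (Set.univ : Set I), ((i : {B // B ∈ S}) : Set X)) ∈ U := by
          rwa [Set.biUnion_univ]
        haveI : Finite I := hIfin
        rcases (Ultrafilter.finite_biUnion_mem_iff Set.finite_univ).1 hUnion' with ⟨i, _, hi⟩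
        exact le_iSup_of_le i (le_iSup₂_of_le U hi le_rfl)
      -- each term in sup is < a; get contradiction
      by_cases hI : Nonempty I
      · have : ∃ m : I, ∀ i : I, adhSet Λ ((i : {B // B ∈ S}) : Set X) x ≤
            adhSet Λ ((m : {B // B ∈ S}) : Set X) x := by
          haveI : Finite I := hIfin
          obtain ⟨m, _, hm⟩ := Set.exists_max_image (Set.univ : Set I)
            (fun i => adhSet Λ ((i : {B // B ∈ S}) : Set X) x)
            (Set.finite_univ) ⟨hI.some, mem_univ _⟩
          exact ⟨m, fun i => hm i (mem_univ i)⟩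
        rcases this with ⟨m, hm⟩
        have hlt : adhSet Λ ((m : {B // B ∈ S}) : Set X) x < a := (m : {B // B ∈ S}).2
        have : a ≤ adhSet Λ ((m : {B // B ∈ S}) : Set X) x :=
          haS.trans (hsup.trans (iSup_le hm))
        exact absurd this (not_le.2 hlt)
      · -- I empty : s = ∅, so a ≤ adhSet ∅ x = ⊥
        have hsempty : s = ∅ := by
          rw [Set.eq_empty_iff_forall_notMem]
          intro y hy
          rcases mem_iUnion.1 (hsub hy) with ⟨i, _⟩
          exact hI ⟨i⟩
        have : adhSet Λ s x = ⊥ := by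
          rw [hsempty]
          refine le_antisymm (iSup₂_le fun U hU => absurd hU (Ultrafilter.empty_notMem (f := U))) bot_le
        rw [this] at haS
        exact absurd (lt_of_lt_of_le hbot haS) (lt_irrefl _)
    -- pick an ultrafilter refining G
    obtain ⟨U, hU⟩ := Filter.exists_ultrafilter_le G
    have hUF : (U : Filter X) ≤ F := hU.trans inf_le_left
    -- every member of U has adherence ≥ a
    have hUa : ∀ B ∈ (U : Ultrafilter X), a ≤ adhSet Λ B x := by
      intro B hB
      by_contra hc
      push_neg at hc
      have hBS : B ∈ S := hc
      have h1 : (⨅ B ∈ S, 𝓟 Bᶜ) ≤ 𝓟 Bᶜ := iInf₂_le B hBS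
      have : Bᶜ ∈ G := Filter.mem_inf_of_right (Filter.le_principal_iff.mp h1)
      have hBc : Bᶜ ∈ U := hU this
      have : (∅ : Set X) ∈ U := by
        have := Filter.inter_mem hB hBc
        simpa using this
      exact absurd this U.empty_notMem
    have hlam : a ≤ Λ.lam U x := by
      rw [hpre U x]
      refine le_iInf₂ fun B hB => ?_
      rw [grill_ultrafilter] at hB
      exact hUa B hB
    exact hlam.trans (le_iSup₂_of_le U hUF le_rfl)

/-- in an approach space (a pre-approach space in which every
`adh A` is a contraction), `cl B = C(θ_B) = adh B`,
`λ(F)(x) = ⨅_{B ∈ F^#} cl B (x)`, `adh F = ⨅_{F ∈ F} cl F` pointwise, and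
`adh F` is a contraction for every filter `F`. -/
theorem stmt19 {X : Type*} (Λ : CAS X)
    (hpre : ∀ (F : Filter X) (x : X), Λ.lam F x = ⨅ B ∈ grill F, adhSet Λ B x)
    (hadh : ∀ A : Set X, Contr Λ (adhSet Λ A)) :
    (∀ B : Set X, Cop Λ (theta B) = adhSet Λ B) ∧
    (∀ (F : Filter X) (x : X), Λ.lam F x = ⨅ B ∈ grill F, Cop Λ (theta B) x) ∧
    (∀ (F : Filter X) (x : X), adhFilter Λ F x = ⨅ s ∈ F, Cop Λ (theta s) x) ∧
    (∀ F : Filter X, Contr Λ (adhFilter Λ F)) := by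
  have hcop : ∀ B : Set X, Cop Λ (theta B) = adhSet Λ B := cop_theta_eq_adhSet Λ hadh
  refine ⟨hcop, ?_, ?_, ?_⟩
  · intro F x
    rw [hpre F x]
    exact iInf_congr fun B => iInf_congr fun _ => by rw [hcop B]
  · intro F x
    rw [adhFilter_eq Λ hpre F x]
    exact iInf_congr fun s => iInf_congr fun _ => by rw [hcop s]
  · intro F
    have heq : adhFilter Λ F = fun x => ⨅ s ∈ F, adhSet Λ s x :=
      funext fun x => adhFilter_eq Λ hpre F x
    rw [heq]
    intro G x
    rw [le_oslash_iff]
    refine le_iInf₂ fun s hs => ?_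
    have hc := hadh s G x
    rw [le_oslash_iff] at hc
    have hmono : limsupF G.sets (fun x => ⨅ s ∈ F, adhSet Λ s x) ≤
        limsupF G.sets (adhSet Λ s) :=
      limsupF_mono fun y => iInf₂_le s hs
    calc Λ.lam G x * limsupF G.sets (fun x => ⨅ s ∈ F, adhSet Λ s x)
        ≤ Λ.lam G x * limsupF G.sets (adhSet Λ s) := V_mul_le_mul_left hmono
      _ ≤ adhSet Λ s x := hc
end
end
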